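/- Suppose a graph G is a (2,2)-graph with sparse–dense partition (B*, C*), i.e., G[B*] bipartite and G[C*] co-bipartite. Define B^F as the set of vertices v such that G[N(v)] is a (1,2)-graph but G[V ∖ N[v]] is not a (2,1)-graph, and C^F as the set of vertices v such that G[N(v)] is not a (1,2)-graph but G[V ∖ N[v]] is a (2,1)-graph. Then B^F ⊆ B* and C^F ⊆ C*. -/
import Mathlib


open SimpleGraph

/-- `s` is an independent set of `G`. -/
def IndepOn {V : Type*} (G : SimpleGraph V) (s : Set V) : Prop :=
  s.Pairwise fun a b => ¬ G.Adj a b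

/-- The induced subgraph `G[s]` is bipartite: `s` partitions into two independent sets. -/
def BipartiteOn {V : Type*} (G : SimpleGraph V) (s : Set V) : Prop :=
  ∃ X Y : Set V, X ∪ Y = s ∧ Disjoint X Y ∧ IndepOn G X ∧ IndepOn G Y

/-- The induced subgraph `G[s]` is co-bipartite: `s` partitions into two cliques. -/
def CobipartiteOn {V : Type*} (G : SimpleGraph V) (s : Set V) : Prop :=
  ∃ Q₁ Q₂ : Set V, Q₁ ∪ Q₂ = s ∧ Disjoint Q₁ Q₂ ∧ G.IsClique Q₁ ∧ G.IsClique Q₂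

/-- `G[s]` is a `(1,2)`-graph: `s` partitions into one independent set and two cliques. -/
def OneTwoOn {V : Type*} (G : SimpleGraph V) (s : Set V) : Prop :=
  ∃ I Q₁ Q₂ : Set V, I ∪ Q₁ ∪ Q₂ = s ∧ Disjoint I Q₁ ∧ Disjoint I Q₂ ∧ Disjoint Q₁ Q₂ ∧
    IndepOn G I ∧ G.IsClique Q₁ ∧ G.IsClique Q₂

/-- `G[s]` is a `(2,1)`-graph: `s` partitions into two independent sets and one clique. -/
def TwoOneOn {V : Type*} (G : SimpleGraph V) (s : Set V) : Prop :=
  ∃ I₁ I₂ Q : Set V, I₁ ∪ I₂ ∪ Q = s ∧ Disjoint I₁ I₂ ∧ Disjoint I₁ Q ∧ Disjoint I₂ Q ∧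
    IndepOn G I₁ ∧ IndepOn G I₂ ∧ G.IsClique Q

lemma indepOn_mono {V : Type*} {G : SimpleGraph V} {s t : Set V}
    (h : s ⊆ t) (ht : IndepOn G t) : IndepOn G s := ht.mono h

/-- If `v` lies in a clique of the partition, the complement of `N[v]` is a `(2,1)`-graph. -/
lemma aux_twoOne {V : Type*} (G : SimpleGraph V) (X Y Q Q' : Set V)
    (hcover : X ∪ Y ∪ (Q ∪ Q') = Set.univ)
    (hXY : Disjoint X Y) (hBC : Disjoint (X ∪ Y) (Q ∪ Q'))
    (hXi : IndepOn G X) (hYi : IndepOn G Y) (hQc : G.IsClique Q) (hQ'c : G.IsClique Q')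
    (v : V) (hv : v ∈ Q) :
    TwoOneOn G (G.neighborSet v ∪ {v})ᶜ := by
  set S := (G.neighborSet v ∪ {v})ᶜ with hS
  refine ⟨X ∩ S, Y ∩ S, Q' ∩ S, ?_, ?_, ?_, ?_, ?_, ?_, ?_⟩
  · apply Set.Subset.antisymm
    · intro u hu
      rcases hu with (⟨_, h⟩ | ⟨_, h⟩) | ⟨_, h⟩ <;> exact h
    · intro u hu
      have hu' : u ∈ X ∪ Y ∪ (Q ∪ Q') := hcover ▸ Set.mem_univ u
      have hunv : u ∉ G.neighborSet v := fun h => hu (Or.inl h)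
      have hune : u ≠ v := fun h => hu (Or.inr h)
      rcases hu' with (hx | hy) | (hq | hq')
      · exact Or.inl (Or.inl ⟨hx, hu⟩)
      · exact Or.inl (Or.inr ⟨hy, hu⟩)
      · exact absurd (hQc hq hv hune).symm hunv
      · exact Or.inr ⟨hq', hu⟩
  · exact (hXY.mono Set.inter_subset_left Set.inter_subset_left)
  · exact (hBC.mono (Set.inter_subset_left.trans Set.subset_union_left)
      (Set.inter_subset_left.trans Set.subset_union_right))
  · exact (hBC.mono (Set.inter_subset_left.trans Set.subset_union_right)
      (Set.inter_subset_left.trans Set.subset_union_right))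
  · exact indepOn_mono Set.inter_subset_left hXi
  · exact indepOn_mono Set.inter_subset_left hYi
  · exact hQ'c.subset Set.inter_subset_left

/-- If `v` lies in an independent set of the partition, `N(v)` is a `(1,2)`-graph. -/
lemma aux_oneTwo {V : Type*} (G : SimpleGraph V) (X Y Q Q' : Set V)
    (hcover : X ∪ Y ∪ (Q ∪ Q') = Set.univ)
    (hXY : Disjoint X Y) (hBC : Disjoint (X ∪ Y) (Q ∪ Q')) (hQQ' : Disjoint Q Q')
    (hXi : IndepOn G X) (hYi : IndepOn G Y) (hQc : G.IsClique Q) (hQ'c : G.IsClique Q')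
    (v : V) (hv : v ∈ X) :
    OneTwoOn G (G.neighborSet v) := by
  set N := G.neighborSet v with hN
  refine ⟨Y ∩ N, Q ∩ N, Q' ∩ N, ?_, ?_, ?_, ?_, ?_, ?_, ?_⟩
  · apply Set.Subset.antisymm
    · intro u hu
      rcases hu with (⟨_, h⟩ | ⟨_, h⟩) | ⟨_, h⟩ <;> exact h
    · intro u hu
      have hu' : u ∈ X ∪ Y ∪ (Q ∪ Q') := hcover ▸ Set.mem_univ u
      have hadj : G.Adj v u := hu
      rcases hu' with (hx | hy) | (hq | hq')
      · exact absurd hadj (hXi hv hx hadj.ne)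
      · exact Or.inl (Or.inl ⟨hy, hu⟩)
      · exact Or.inl (Or.inr ⟨hq, hu⟩)
      · exact Or.inr ⟨hq', hu⟩
  · exact (hBC.mono (Set.inter_subset_left.trans Set.subset_union_right)
      (Set.inter_subset_left.trans Set.subset_union_left))
  · exact (hBC.mono (Set.inter_subset_left.trans Set.subset_union_right)
      (Set.inter_subset_left.trans Set.subset_union_right))
  · exact hQQ'.mono Set.inter_subset_left Set.inter_subset_left
  · exact indepOn_mono Set.inter_subset_left hYi
  · exact hQc.subset Set.inter_subset_left
  · exact hQ'c.subset Set.inter_subset_left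

/-- If `(B*, C*)` is a sparse–dense partition of `G`, then the set `B^F` of vertices `v`
with `G[N(v)]` a `(1,2)`-graph but `G[V ∖ N[v]]` not a `(2,1)`-graph is contained in
`B*`, and the set `C^F` of vertices with the opposite behavior is contained in `C*`. -/
theorem forced_vertices_subset {V : Type*} (G : SimpleGraph V)
    (Bstar Cstar : Set V)
    (hpart : Bstar ∪ Cstar = Set.univ) (hdisj : Disjoint Bstar Cstar)
    (hB : BipartiteOn G Bstar) (hC : CobipartiteOn G Cstar) :
    {v : V | OneTwoOn G (G.neighborSet v) ∧
        ¬ TwoOneOn G (G.neighborSet v ∪ {v})ᶜ} ⊆ Bstar ∧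
      {v : V | ¬ OneTwoOn G (G.neighborSet v) ∧
        TwoOneOn G (G.neighborSet v ∪ {v})ᶜ} ⊆ Cstar := by
  obtain ⟨X, Y, hXY, hXYd, hXi, hYi⟩ := hB
  obtain ⟨Q, Q', hQ, hQd, hQc, hQ'c⟩ := hC
  have hcover : X ∪ Y ∪ (Q ∪ Q') = Set.univ := by rw [hXY, hQ, hpart]
  have hBC : Disjoint (X ∪ Y) (Q ∪ Q') := by rw [hXY, hQ]; exact hdisj
  have hcover' : Y ∪ X ∪ (Q ∪ Q') = Set.univ := by
    rw [Set.union_comm Y X]; exact hcover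
  have hcover'' : X ∪ Y ∪ (Q' ∪ Q) = Set.univ := by
    rw [Set.union_comm Q' Q]; exact hcover
  have hBC'' : Disjoint (X ∪ Y) (Q' ∪ Q) := by
    rw [Set.union_comm Q' Q]; exact hBC
  -- membership in Cstar implies TwoOneOn of complement of closed nbhd
  have hCimp : ∀ v ∈ Cstar, TwoOneOn G (G.neighborSet v ∪ {v})ᶜ := by
    intro v hvC
    rw [← hQ] at hvC
    rcases hvC with hq | hq'
    · exact aux_twoOne G X Y Q Q' hcover hXYd hBC hXi hYi hQc hQ'c v hq
    · exact aux_twoOne G X Y Q' Q hcover'' hXYd hBC'' hXi hYi hQ'c hQc v hq'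
  -- membership in Bstar implies OneTwoOn of open nbhd
  have hBimp : ∀ v ∈ Bstar, OneTwoOn G (G.neighborSet v) := by
    intro v hvB
    rw [← hXY] at hvB
    rcases hvB with hx | hy
    · exact aux_oneTwo G X Y Q Q' hcover hXYd hBC hQd hXi hYi hQc hQ'c v hx
    · exact aux_oneTwo G Y X Q Q' hcover' hXYd.symm
        (by rw [Set.union_comm Y X]; exact hBC) hQd hYi hXi hQc hQ'c v hy
  constructor
  · intro v hv
    by_contra hvB
    have hvC : v ∈ Cstar := by
      have := hpart ▸ Set.mem_univ v
      rcases this with h | h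
      · exact absurd h hvB
      · exact h
    exact hv.2 (hCimp v hvC)
  · intro v hv
    by_contra hvC
    have hvB : v ∈ Bstar := by
      have := hpart ▸ Set.mem_univ v
      rcases this with h | h
      · exact h
      · exact absurd h hvC
    exact hv.1 (hBimp v hvB)
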